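/- With L(f,g) = g_{xx} + (2g_{xy} − f_{xx})p + g_{yy}p², and N the set of series satisfying conditions D1–D4 (K(x,y,0)=0, K_p(0,y,0)=0, K_p(x,0,0)=0, K_{pp}(0,y,0)=0), one has Im(L) ∩ N = {0}: if L(f,g) lies in N for some formal power series pair (f,g), then L(f,g) = 0. -/
import Mathlib


/-- Coefficient of `x^i y^j p^k` in the homological operator
`L(f,g) = g_{xx} + (2 g_{xy} - f_{xx}) p + g_{yy} p²`, where `f ∈ ℝ[[x]]` and
`g ∈ ℝ[[x,y]]` are encoded by their coefficient functions. -/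
def Lc (f : ℕ → ℝ) (g : ℕ → ℕ → ℝ) : ℕ → ℕ → ℕ → ℝ := fun i j k =>
  match k with
  | 0 => ((i : ℝ) + 1) * ((i : ℝ) + 2) * g (i + 2) j
  | 1 => 2 * ((i : ℝ) + 1) * ((j : ℝ) + 1) * g (i + 1) (j + 1)
         - (if j = 0 then ((i : ℝ) + 1) * ((i : ℝ) + 2) * f (i + 2) else 0)
  | 2 => ((j : ℝ) + 1) * ((j : ℝ) + 2) * g i (j + 2)
  | _ => 0

/-- `Im(L) ∩ N = {0}`: if `L(f,g)` satisfies the normal form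
conditions D1–D4 (`K(x,y,0)=0`, `K_p(0,y,0)=0`, `K_p(x,0,0)=0`,
`K_{pp}(0,y,0)=0`, expressed on coefficients), then `L(f,g) = 0`. -/
theorem statement9 (f : ℕ → ℝ) (g : ℕ → ℕ → ℝ)
    (hD1 : ∀ i j : ℕ, Lc f g i j 0 = 0)
    (hD2 : ∀ j : ℕ, Lc f g 0 j 1 = 0)
    (hD3 : ∀ i : ℕ, Lc f g i 0 1 = 0)
    (hD4 : ∀ j : ℕ, Lc f g 0 j 2 = 0) :
    ∀ i j k : ℕ, Lc f g i j k = 0 := by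
  have hg2 : ∀ a b : ℕ, g (a + 2) b = 0 := by
    intro a b
    have h := hD1 a b
    simp only [Lc] at h
    rcases mul_eq_zero.mp h with h | h
    · exact absurd h (by positivity)
    · exact h
  have hg1 : ∀ b : ℕ, g 1 (b + 2) = 0 := by
    intro b
    have h := hD2 (b + 1)
    simp only [Lc] at h
    rw [if_neg (Nat.succ_ne_zero b)] at h
    have h2 : (2 : ℝ) * ((0:ℕ) + 1 : ℝ) * (((b+1 : ℕ) : ℝ) + 1) ≠ 0 := by positivity
    have h3 : g (0 + 1) (b + 1 + 1) = 0 := by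
      rcases mul_eq_zero.mp (by linarith : (2 : ℝ) * ((0:ℕ) + 1 : ℝ) * (((b+1 : ℕ) : ℝ) + 1) * g (0+1) (b+1+1) = 0) with h | h
      · exact absurd h h2
      · exact h
    simpa using h3
  intro i j k
  match k with
  | 0 => exact hD1 i j
  | 1 =>
    match j with
    | 0 => exact hD3 i
    | j + 1 =>
      simp only [Lc, Nat.add_eq_zero, and_false, Nat.succ_ne_zero, ite_false, sub_zero]
      match i with
      | 0 =>
        rw [show (0:ℕ)+1 = 1 from rfl, show j+1+1 = j+2 from rfl, hg1 j]; ring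
      | i + 1 => rw [show i + 1 + 1 = i + 2 from rfl, hg2 i (j + 1 + 1)]; ring
  | 2 =>
    match i with
    | 0 => exact hD4 j
    | 1 => simp only [Lc]; rw [hg1 j]; ring
    | i + 2 => simp only [Lc]; rw [hg2 i (j + 2)]; ring
  | (n + 3) => rfl
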